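/- Let X be a compact subset of ℝ^d and let X_n = {x_1,…,x_n} be the n-point prefix of a coffee-house (greedy maximin) sequence: x_1 ∈ X arbitrary and x_{k+1} ∈ argmax_{x∈X} d(x, X_k). Then for all n ≥ 1, CR(X_n) ≤ 2 · CR*_n, i.e., 1/2 ≤ CR*_n / CR(X_n) ≤ 1, where CR*_n = min over all n-point sets Z ⊆ X of CR(Z). This holds irrespective of the choice of x_1. -/

import Mathlib

open Metric

/-- The covering radius `CR(A) = sup_{x∈X} d(x,A)` of a design `A` in the domain `X`. -/
noncomputable def covRad {d : ℕ} (X A : Set (EuclideanSpace ℝ (Fin d))) : ℝ :=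
  sSup ((fun x => infDist x A) '' X)

/-- The minimal covering radius over `n`-point designs in `X`. -/
noncomputable def covRadStar {d : ℕ} (X : Set (EuclideanSpace ℝ (Fin d))) (n : ℕ) : ℝ :=
  sInf {v : ℝ | ∃ Z : Finset (EuclideanSpace ℝ (Fin d)),
    ↑Z ⊆ X ∧ Z.card = n ∧ v = covRad X ↑Z}

section Aux

variable {d : ℕ} {X A B : Set (EuclideanSpace ℝ (Fin d))}

lemma covRad_bddAbove (hX : IsCompact X) (A : Set (EuclideanSpace ℝ (Fin d))) :
    BddAbove ((fun x => infDist x A) '' X) :=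
  (hX.image (continuous_infDist_pt A)).bddAbove

lemma le_covRad (hX : IsCompact X) {y : EuclideanSpace ℝ (Fin d)} (hy : y ∈ X) :
    infDist y A ≤ covRad X A :=
  le_csSup (covRad_bddAbove hX A) ⟨y, hy, rfl⟩

lemma covRad_le (hXne : X.Nonempty) {c : ℝ} (h : ∀ y ∈ X, infDist y A ≤ c) :
    covRad X A ≤ c := by
  refine csSup_le (hXne.image _) ?_
  rintro _ ⟨y, hy, rfl⟩
  exact h y hy

lemma covRad_nonneg (hX : IsCompact X) (hXne : X.Nonempty) :
    0 ≤ covRad X A := by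
  obtain ⟨y, hy⟩ := hXne
  exact le_trans infDist_nonneg (le_covRad hX hy)

lemma covRad_anti (hX : IsCompact X) (hXne : X.Nonempty) (hAB : A ⊆ B) (hA : A.Nonempty) :
    covRad X B ≤ covRad X A := by
  refine covRad_le hXne fun y hy => ?_
  exact le_trans (infDist_le_infDist_of_subset hAB hA) (le_covRad hX hy)

end Aux

/-- **50% optimality gap of coffee-house design for the covering radius.**  If `X_n` is
the `n`-point prefix of a coffee-house (greedy maximin) sequence in a compact `X ⊂ ℝ^d`
with nonempty interior, then `CR*_n ≤ CR(X_n) ≤ 2 CR*_n` for all `n ≥ 1`, irrespective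
of the choice of the first point. -/
theorem coffeeHouse_covRad_half_efficiency {d : ℕ}
    (X : Set (EuclideanSpace ℝ (Fin d))) (hX : IsCompact X)
    (hint : (interior X).Nonempty)
    (x : ℕ → EuclideanSpace ℝ (Fin d)) (hx0 : x 0 ∈ X)
    (hgreedy : ∀ n : ℕ, 1 ≤ n → x n ∈ X ∧ ∀ y ∈ X,
      infDist y (x '' Set.Iio n) ≤ infDist (x n) (x '' Set.Iio n)) :
    ∀ n : ℕ, 1 ≤ n →
      covRadStar X n ≤ covRad X (x '' Set.Iio n) ∧
      covRad X (x '' Set.Iio n) ≤ 2 * covRadStar X n := by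
  intro n hn
  obtain ⟨c, hc⟩ := hint
  have hXne : X.Nonempty := ⟨c, interior_subset hc⟩
  have hmem : ∀ k, x k ∈ X := by
    intro k
    rcases Nat.eq_zero_or_pos k with hk | hk
    · simpa [hk] using hx0
    · exact (hgreedy k hk).1
  set P : Set (EuclideanSpace ℝ (Fin d)) := x '' Set.Iio n with hP
  have hPne : P.Nonempty := ⟨x 0, 0, hn, rfl⟩
  have hPX : P ⊆ X := by rintro _ ⟨k, -, rfl⟩; exact hmem k
  -- the design set
  set S : Set ℝ := {v : ℝ | ∃ Z : Finset (EuclideanSpace ℝ (Fin d)),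
      ↑Z ⊆ X ∧ Z.card = n ∧ v = covRad X ↑Z} with hS
  have hSbdd : BddBelow S := by
    refine ⟨0, ?_⟩
    rintro v ⟨Z, hZX, hZc, rfl⟩
    exact covRad_nonneg hX hXne
  have hSnonneg : ∀ v ∈ S, (0:ℝ) ≤ v := by
    rintro v ⟨Z, hZX, hZc, rfl⟩
    exact covRad_nonneg hX hXne
  -- greedy property reformulated: for `1 ≤ j`, `infDist (x j) (prefix j) = covRad X (prefix j)`
  have hkey : ∀ j : ℕ, 1 ≤ j → covRad X (x '' Set.Iio j) ≤ infDist (x j) (x '' Set.Iio j) :=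
    fun j hj => covRad_le hXne (hgreedy j hj).2
  -- pairwise separation
  have hsep : ∀ i j : ℕ, i < j → j ≤ n → covRad X P ≤ dist (x i) (x j) := by
    intro i j hij hjn
    have h1 : infDist (x j) (x '' Set.Iio j) ≤ dist (x j) (x i) :=
      infDist_le_dist_of_mem ⟨i, hij, rfl⟩
    have h2 : covRad X P ≤ covRad X (x '' Set.Iio j) := by
      refine covRad_anti hX hXne (Set.image_mono ?_) ⟨x i, i, hij, rfl⟩
      exact fun k hk => lt_of_lt_of_le hk hjn
    rw [dist_comm]
    exact le_trans h2 (le_trans (hkey j (by omega)) h1)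
  -- every feasible design has covering radius at least half of `covRad X P`
  have hhalf : ∀ v ∈ S, covRad X P ≤ 2 * v := by
    rintro v ⟨Z, hZX, hZc, rfl⟩
    have hZne : (Z : Set (EuclideanSpace ℝ (Fin d))).Nonempty := by
      rw [Finset.coe_nonempty, ← Finset.card_pos, hZc]; exact hn
    have hZcomp : IsCompact (Z : Set (EuclideanSpace ℝ (Fin d))) :=
      Z.finite_toSet.isCompact
    -- nearest point in Z to each x i
    have hchoice : ∀ i : ℕ, ∃ z ∈ (Z : Set (EuclideanSpace ℝ (Fin d))),
        infDist (x i) (Z : Set (EuclideanSpace ℝ (Fin d))) = dist (x i) z :=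
      fun i => hZcomp.exists_infDist_eq_dist hZne (x i)
    choose z hz1 hz2 using hchoice
    -- pigeonhole on indices 0..n
    have hpig : ∃ i ∈ Finset.range (n + 1), ∃ j ∈ Finset.range (n + 1), i ≠ j ∧ z i = z j := by
      refine Finset.exists_ne_map_eq_of_card_lt_of_maps_to (t := Z) ?_ ?_
      · rw [Finset.card_range, hZc]; exact Nat.lt_succ_self n
      · intro i _; exact Finset.mem_coe.mp (hz1 i)
    obtain ⟨i, hi, j, hj, hij, hzij⟩ := hpig
    rw [Finset.mem_range, Nat.lt_succ_iff] at hi hj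
    -- WLOG i < j
    have main : ∀ i j : ℕ, i < j → j ≤ n → z i = z j → covRad X P ≤ 2 * covRad X ↑Z := by
      intro i j hij hjn hz
      have h1 : covRad X P ≤ dist (x i) (x j) := hsep i j hij hjn
      have h2 : dist (x i) (x j) ≤ dist (x i) (z i) + dist (z j) (x j) := by
        rw [hz]; exact dist_triangle _ _ _
      have h3 : dist (x i) (z i) ≤ covRad X ↑Z := by
        rw [← hz2 i]; exact le_covRad hX (hmem i)
      have h4 : dist (z j) (x j) ≤ covRad X ↑Z := by
        rw [dist_comm, ← hz2 j]; exact le_covRad hX (hmem j)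
      linarith
    rcases lt_or_gt_of_ne hij with h | h
    · exact main i j h hj hzij
    · exact main j i h hi hzij.symm
  -- case on whether the ambient space is trivial
  rcases subsingleton_or_nontrivial (EuclideanSpace ℝ (Fin d)) with hsub | hnontriv
  · -- degenerate case: everything has covering radius 0
    have hcov0 : ∀ A : Set (EuclideanSpace ℝ (Fin d)), A.Nonempty → covRad X A = 0 := by
      intro A ⟨a, ha⟩
      refine le_antisymm (covRad_le hXne fun y hy => ?_) (covRad_nonneg hX hXne)
      have : y = a := Subsingleton.elim y a
      rw [this]
      exact le_of_eq (infDist_zero_of_mem ha)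
    have hP0 : covRad X P = 0 := hcov0 P hPne
    constructor
    · rw [hP0]
      show sInf S ≤ 0
      rcases Set.eq_empty_or_nonempty S with h | h
      · rw [h, Real.sInf_empty]
      · obtain ⟨v, Z, hZX, hZc, hveq⟩ := h
        have hZne : (Z : Set (EuclideanSpace ℝ (Fin d))).Nonempty := by
          rw [Finset.coe_nonempty, ← Finset.card_pos, hZc]; exact hn
        have hv0 : v = 0 := by rw [hveq]; exact hcov0 _ hZne
        calc sInf S ≤ v := csInf_le hSbdd ⟨Z, hZX, hZc, hveq⟩
          _ = 0 := hv0
    · rw [hP0]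
      have : (0:ℝ) ≤ sInf S := Real.sInf_nonneg fun v hv => hSnonneg v hv
      show (0:ℝ) ≤ 2 * sInf S
      linarith
  · -- main case: `X` is infinite
    have hXinf : X.Infinite := infinite_of_mem_nhds c (mem_interior_iff_mem_nhds.mp hc)
    -- extend the prefix to an `n`-point design
    have hPfin : P.Finite := (Set.finite_Iio n).image x
    have hPcard : P.ncard ≤ n := by
      have hIio : (Set.Iio n : Set ℕ).ncard = n := by
        rw [← Finset.coe_range, Set.ncard_coe_finset, Finset.card_range]
      have h := Set.ncard_image_le (f := x) (s := Set.Iio n) (Set.finite_Iio n)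
      rw [hIio] at h
      exact h
    obtain ⟨Q, hPQ, hQX, hQcard⟩ := hXinf.exists_superset_ncard_eq hPX hPfin hPcard
    have hQfin : Q.Finite := Set.finite_of_ncard_ne_zero (by omega)
    set Z : Finset (EuclideanSpace ℝ (Fin d)) := hQfin.toFinset with hZdef
    have hZcoe : (Z : Set (EuclideanSpace ℝ (Fin d))) = Q := hQfin.coe_toFinset
    have hZX : (Z : Set (EuclideanSpace ℝ (Fin d))) ⊆ X := by rw [hZcoe]; exact hQX
    have hZcard : Z.card = n := by
      rw [hZdef, ← Set.ncard_eq_toFinset_card Q hQfin]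
      exact hQcard
    have hZmem : covRad X ↑Z ∈ S := ⟨Z, hZX, hZcard, rfl⟩
    constructor
    · calc covRadStar X n = sInf S := rfl
        _ ≤ covRad X ↑Z := csInf_le hSbdd hZmem
        _ ≤ covRad X P := by
            refine covRad_anti hX hXne ?_ hPne
            rw [hZcoe]; exact hPQ
    · have hSne : S.Nonempty := ⟨_, hZmem⟩
      have h1 : covRad X P / 2 ≤ sInf S := by
        refine le_csInf hSne fun v hv => ?_
        have := hhalf v hv
        linarith
      show covRad X P ≤ 2 * sInf S
      linarith
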